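/- Let Z_A, X_A be self-adjoint unitaries on H_A, and Z_B, X_B self-adjoint unitaries on H_B, and let ψ ∈ H_A ⊗ H_B be a unit vector. If ⟨ψ| [Z_A ⊗ (X_B + Z_B) + X_A ⊗ (X_B − Z_B)] |ψ⟩ = 2√2 (the maximal quantum value of CHSH), then X_A Z_A ψ = − Z_A X_A ψ. -/
import Mathlib


open scoped InnerProductSpace

/-- Bipartite structure is modelled by commuting operators on a common Hilbert
space: operators `Z_A, X_A` ("Alice side", i.e. `O ⊗ 1`) commute with
`Z_B, X_B` ("Bob side", i.e. `1 ⊗ O`). If the CHSH operator attains the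
Tsirelson value `2√2` on a unit vector `ψ`, then `X_A Z_A ψ = − Z_A X_A ψ`. -/
theorem stmt2 {H : Type*} [NormedAddCommGroup H] [InnerProductSpace ℂ H] [CompleteSpace H]
    (ZA XA ZB XB : H →L[ℂ] H)
    (hZAsa : ContinuousLinearMap.adjoint ZA = ZA) (hZA2 : ZA * ZA = 1)
    (hXAsa : ContinuousLinearMap.adjoint XA = XA) (hXA2 : XA * XA = 1)
    (hZBsa : ContinuousLinearMap.adjoint ZB = ZB) (hZB2 : ZB * ZB = 1)
    (hXBsa : ContinuousLinearMap.adjoint XB = XB) (hXB2 : XB * XB = 1)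
    (hc1 : Commute ZA ZB) (hc2 : Commute ZA XB)
    (hc3 : Commute XA ZB) (hc4 : Commute XA XB)
    (ψ : H) (hψ : ‖ψ‖ = 1)
    (hCHSH : ⟪ψ, (ZA * (XB + ZB) + XA * (XB - ZB)) ψ⟫_ℂ
        = ((2 * Real.sqrt 2 : ℝ) : ℂ)) :
    XA (ZA ψ) = - (ZA (XA ψ)) := by
  set r : ℂ := ((Real.sqrt 2 : ℝ) : ℂ) with hr
  have hr2 : r * r = 2 := by
    rw [hr, ← Complex.ofReal_mul, Real.mul_self_sqrt (by norm_num)]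
    norm_num
  set C1 : H →L[ℂ] H := XB + ZB with hC1
  set C2 : H →L[ℂ] H := XB - ZB with hC2
  set T1 : H →L[ℂ] H := C1 - r • ZA with hT1
  set T2 : H →L[ℂ] H := C2 - r • XA with hT2
  -- key operator identity
  have hkey : T1 * T1 + T2 * T2
      = (8 : ℂ) • (1 : H →L[ℂ] H) - (2 * r) • (ZA * C1 + XA * C2) := by
    simp only [hT1, hT2, hC1, hC2, mul_sub, sub_mul, mul_add, add_mul,
      smul_mul_assoc, mul_smul_comm, smul_smul, hr2, hZA2, hXA2, hXB2, hZB2,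
      ← hc1.eq, ← hc2.eq, ← hc3.eq, ← hc4.eq, smul_sub, smul_add]
    module
  -- self-adjointness of T1, T2
  have hrstar : star r = r := by rw [hr]; exact Complex.conj_ofReal _
  have hsa1 : ContinuousLinearMap.adjoint T1 = T1 := by
    rw [hT1, hC1, ← ContinuousLinearMap.star_eq_adjoint, star_sub, star_add,
      star_smul, hrstar]
    simp [ContinuousLinearMap.star_eq_adjoint, hXBsa, hZBsa, hZAsa]
  have hsa2 : ContinuousLinearMap.adjoint T2 = T2 := by
    rw [hT2, hC2, ← ContinuousLinearMap.star_eq_adjoint, star_sub, star_sub,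
      star_smul, hrstar]
    simp [ContinuousLinearMap.star_eq_adjoint, hXBsa, hZBsa, hXAsa]
  have hnorm : ∀ (T : H →L[ℂ] H), ContinuousLinearMap.adjoint T = T →
      ⟪ψ, (T * T) ψ⟫_ℂ = ((‖T ψ‖ ^ 2 : ℝ) : ℂ) := by
    intro T hT
    have : ⟪ψ, T (T ψ)⟫_ℂ = ⟪ContinuousLinearMap.adjoint T ψ, T ψ⟫_ℂ :=
      (ContinuousLinearMap.adjoint_inner_left T (T ψ) ψ).symm
    rw [ContinuousLinearMap.mul_apply, this, hT, inner_self_eq_norm_sq_to_K]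
    norm_cast
  have hinner1 : ⟪ψ, ψ⟫_ℂ = 1 := by
    rw [inner_self_eq_norm_sq_to_K, hψ]; norm_num
  have hzero : ((‖T1 ψ‖ ^ 2 : ℝ) : ℂ) + ((‖T2 ψ‖ ^ 2 : ℝ) : ℂ) = 0 := by
    rw [← hnorm T1 hsa1, ← hnorm T2 hsa2]
    have : ⟪ψ, (T1 * T1) ψ⟫_ℂ + ⟪ψ, (T2 * T2) ψ⟫_ℂ
        = ⟪ψ, (T1 * T1 + T2 * T2) ψ⟫_ℂ := by
      rw [ContinuousLinearMap.add_apply, inner_add_right]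
    rw [this, hkey]
    have hC : ⟪ψ, (ZA * C1 + XA * C2) ψ⟫_ℂ = 2 * r := by
      rw [hCHSH, hr, Complex.ofReal_mul]; norm_num
    simp only [ContinuousLinearMap.sub_apply, ContinuousLinearMap.smul_apply,
      ContinuousLinearMap.one_apply, inner_sub_right, inner_smul_right, hC,
      hinner1]
    ring_nf
    rw [sq, hr2]
    ring
  have hre : ‖T1 ψ‖ ^ 2 + ‖T2 ψ‖ ^ 2 = 0 := by exact_mod_cast hzero
  have h1 : T1 ψ = 0 := by
    have hs : ‖T1 ψ‖ ^ 2 = 0 := by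
      have := sq_nonneg ‖T1 ψ‖; have := sq_nonneg ‖T2 ψ‖; linarith
    simpa using sq_eq_zero_iff.mp hs
  have h2 : T2 ψ = 0 := by
    have hs : ‖T2 ψ‖ ^ 2 = 0 := by
      have := sq_nonneg ‖T1 ψ‖; have := sq_nonneg ‖T2 ψ‖; linarith
    simpa using sq_eq_zero_iff.mp hs
  have e1 : C1 ψ = r • ZA ψ := by
    have := h1
    rw [hT1, ContinuousLinearMap.sub_apply, sub_eq_zero] at this
    simpa using this
  have e2 : C2 ψ = r • XA ψ := by
    have := h2
    rw [hT2, ContinuousLinearMap.sub_apply, sub_eq_zero] at this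
    simpa using this
  -- anticommutation of C1 and C2
  have hanti : C1 * C2 + C2 * C1 = 0 := by
    simp only [hC1, hC2, mul_sub, sub_mul, mul_add, add_mul, hXB2, hZB2]
    abel
  have hcommA1 : XA * C1 = C1 * XA := ((hc4.add_right hc3)).eq
  have hcommA2 : ZA * C2 = C2 * ZA := ((hc2.sub_right hc1)).eq
  have k1 : C1 (C2 ψ) = (r * r) • XA (ZA ψ) := by
    rw [e2, map_smul]
    have : C1 (XA ψ) = XA (C1 ψ) := by
      have := congrArg (fun T : H →L[ℂ] H => T ψ) hcommA1
      simpa using this.symm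
    rw [this, e1, map_smul, smul_smul]
  have k2 : C2 (C1 ψ) = (r * r) • ZA (XA ψ) := by
    rw [e1, map_smul]
    have : C2 (ZA ψ) = ZA (C2 ψ) := by
      have := congrArg (fun T : H →L[ℂ] H => T ψ) hcommA2
      simpa using this.symm
    rw [this, e2, map_smul, smul_smul]
  have k3 : C1 (C2 ψ) = - C2 (C1 ψ) := by
    have := congrArg (fun T : H →L[ℂ] H => T ψ) hanti
    simp only [ContinuousLinearMap.add_apply, ContinuousLinearMap.mul_apply,
      ContinuousLinearMap.zero_apply] at this
    exact eq_neg_of_add_eq_zero_left this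
  have : (r * r) • XA (ZA ψ) = (r * r) • (- ZA (XA ψ)) := by
    rw [← k1, k3, k2, smul_neg]
  have h2ne : (r * r) ≠ 0 := by rw [hr2]; norm_num
  exact smul_right_injective H h2ne this
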